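/- (Uniqueness of projection onto the Pohozaev manifold) For $N \ge 3$, $\mu > 0$, $2 + \frac{4}{N} < q < 2^*$ and any $u \in H^1(\mathbb{R}^N)$ with $u \ne 0$, there exists a unique $t_u > 0$ such that the fiber map $t \mapsto \Phi_\mu(t^{N/2}u(t\cdot)) = \frac{t^2}{2}A - \frac{t^{2^*}}{2^*}B - \frac{\mu t^{q\gamma_q}}{q}C$ (with $A = \|\nabla u\|_2^2 > 0$, $B = \|u\|_{2^*}^{2^*} > 0$, $C = \|u\|_q^q > 0$) has derivative zero at $t = t_u$; equivalently $t_u^{N/2}u(t_u \cdot) \in \mathcal{M}_\mu(c)$ where $c = \|u\|_2^2$. -/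

import Mathlib

open Real Set

/-- Uniqueness of the projection onto the Pohozaev manifold: for `A, B, C > 0`,
`μ > 0` and exponents `2 < qγ_q < 2^*`, the fiber map
`g(t) = (t²/2)A - (t^{2^*}/2^*)B - (μ t^{qγ_q}/q)C` has a unique critical point
`t_u > 0`, which is its global maximum on `(0,∞)`. -/
theorem stmt14 (N : ℕ) (hN : 3 ≤ N) (q μ A B C p γq : ℝ)
    (hp : p = 2 * (N : ℝ) / ((N : ℝ) - 2)) (hγ : γq = (N : ℝ) * (q - 2) / (2 * q))
    (hq1 : 2 + 4 / (N : ℝ) < q) (hq2 : q < p)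
    (hμ : 0 < μ) (hA : 0 < A) (hB : 0 < B) (hC : 0 < C)
    (g : ℝ → ℝ)
    (hg : ∀ t : ℝ, g t = t ^ 2 / 2 * A - t ^ p / p * B - μ * t ^ (q * γq) / q * C) :
    (∃! tu : ℝ, 0 < tu ∧ deriv g tu = 0) ∧
    ∀ tu : ℝ, 0 < tu → deriv g tu = 0 → ∀ s : ℝ, 0 < s → g s ≤ g tu := by
  have hN3 : (3:ℝ) ≤ (N:ℝ) := by exact_mod_cast hN
  have hN0 : (0:ℝ) < N := by linarith
  have hN2 : (0:ℝ) < (N:ℝ) - 2 := by linarith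
  have h4N : (0:ℝ) < 4 / N := by positivity
  have hq0 : 0 < q := by linarith
  have hp2 : 2 < p := by rw [hp, lt_div_iff₀ hN2]; linarith
  have hp0 : 0 < p := by linarith
  obtain ⟨Q, hQdef⟩ : ∃ Q : ℝ, Q = q * γq := ⟨_, rfl⟩
  rw [← hQdef] at hg
  have hQval : Q = (N:ℝ) * (q - 2) / 2 := by
    rw [hQdef, hγ]; field_simp
  have hq1' : 4 / (N:ℝ) < q - 2 := by linarith
  have h4 : (4:ℝ) < N * (q - 2) := by
    have := (div_lt_iff₀ hN0).mp hq1'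
    nlinarith
  have hQ2 : 2 < Q := by rw [hQval]; linarith
  have hqN : q * ((N:ℝ) - 2) < 2 * N := by
    rw [hp, lt_div_iff₀ hN2] at hq2; linarith
  have hQp : Q < p := by
    rw [hQval, hp, div_lt_div_iff₀ (by norm_num : (0:ℝ) < 2) hN2]
    nlinarith
  obtain ⟨D, hDdef⟩ : ∃ D : ℝ, D = μ * Q * C / q := ⟨_, rfl⟩
  have hD : 0 < D := by
    have hQ0 : 0 < Q := by linarith
    rw [hDdef]; positivity
  obtain ⟨f, hfdef⟩ : ∃ f : ℝ → ℝ, ∀ t : ℝ, f t = B * t ^ (p - 2) + D * t ^ (Q - 2) :=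
    ⟨_, fun _ => rfl⟩
  -- strict monotonicity of f on (0, ∞)
  have hfmono : StrictMonoOn f (Ioi (0:ℝ)) := by
    intro x hx y hy hxy
    have h1 : x ^ (p - 2) < y ^ (p - 2) :=
      Real.rpow_lt_rpow (le_of_lt hx) hxy (by linarith)
    have h2 : x ^ (Q - 2) < y ^ (Q - 2) :=
      Real.rpow_lt_rpow (le_of_lt hx) hxy (by linarith)
    rw [hfdef, hfdef]
    exact add_lt_add (mul_lt_mul_of_pos_left h1 hB) (mul_lt_mul_of_pos_left h2 hD)
  -- derivative of g at positive points
  have hgeq : g = fun t : ℝ => t ^ 2 / 2 * A - t ^ p / p * B - μ * t ^ Q / q * C :=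
    funext hg
  have hg' : ∀ t : ℝ, 0 < t → HasDerivAt g (t * (A - f t)) t := by
    intro t ht
    have h1 : HasDerivAt (fun t : ℝ => t ^ 2 / 2 * A) (t * A) t := by
      have := ((hasDerivAt_pow 2 t).div_const 2).mul_const A
      refine this.congr_deriv ?_
      rw [Nat.cast_ofNat, show (2:ℕ) - 1 = 1 from rfl, pow_one]; ring
    have h2 : HasDerivAt (fun t : ℝ => t ^ p / p * B) (p * t ^ (p - 1) / p * B) t :=
      ((Real.hasDerivAt_rpow_const (p := p) (Or.inl (ne_of_gt ht))).div_const p).mul_const B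
    have h3 : HasDerivAt (fun t : ℝ => μ * t ^ Q / q * C) (μ * (Q * t ^ (Q - 1)) / q * C) t :=
      (((Real.hasDerivAt_rpow_const (p := Q) (Or.inl (ne_of_gt ht))).const_mul μ).div_const q).mul_const C
    have h5 := (h1.sub h2).sub h3
    rw [show ((fun t : ℝ => t ^ 2 / 2 * A) - fun t : ℝ => t ^ p / p * B) - (fun t : ℝ => μ * t ^ Q / q * C) = g from by rw [hgeq]; rfl] at h5
    refine h5.congr_deriv ?_
    have e1 : t ^ (p - 1) = t ^ (p - 2) * t := by
      rw [show p - 1 = (p - 2) + 1 by ring, Real.rpow_add_one (ne_of_gt ht)]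
    have e2 : t ^ (Q - 1) = t ^ (Q - 2) * t := by
      rw [show Q - 1 = (Q - 2) + 1 by ring, Real.rpow_add_one (ne_of_gt ht)]
    rw [e1, e2, hfdef t, hDdef]
    field_simp
    ring
  have hderiv_eq : ∀ t : ℝ, 0 < t → deriv g t = t * (A - f t) := fun t ht => (hg' t ht).deriv
  have hcrit : ∀ y : ℝ, 0 < y → deriv g y = 0 → f y = A := by
    intro y hy h
    rw [hderiv_eq y hy] at h
    rcases mul_eq_zero.mp h with h | h
    · exact absurd h (ne_of_gt hy)
    · linarith
  -- existence of a zero of f - A via IVT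
  obtain ⟨a, hadef⟩ : ∃ a : ℝ, a = min 1 ((A / (2 * (B + D))) ^ (1 / (Q - 2))) := ⟨_, rfl⟩
  obtain ⟨b, hbdef⟩ : ∃ b : ℝ, b = max 1 ((2 * A / B) ^ (1 / (p - 2))) := ⟨_, rfl⟩
  have hBD : 0 < B + D := by linarith
  have ha0 : 0 < a := hadef ▸ lt_min one_pos (Real.rpow_pos_of_pos (by positivity) _)
  have hab : a ≤ b := by
    rw [hadef, hbdef]; exact le_trans (min_le_left _ _) (le_max_left _ _)
  have hQ2' : (0:ℝ) < Q - 2 := by linarith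
  have hp2' : (0:ℝ) < p - 2 := by linarith
  have hfa : f a ≤ A := by
    have ha1 : a ≤ 1 := hadef ▸ min_le_left _ _
    have h1 : a ^ (p - 2) ≤ a ^ (Q - 2) :=
      Real.rpow_le_rpow_of_exponent_ge ha0 ha1 (by linarith)
    have h2 : a ^ (Q - 2) ≤ A / (2 * (B + D)) := by
      have ha' : a ≤ (A / (2 * (B + D))) ^ (1 / (Q - 2)) := hadef ▸ min_le_right _ _
      have := Real.rpow_le_rpow (le_of_lt ha0) ha' (le_of_lt hQ2')
      rwa [← Real.rpow_mul (by positivity), one_div_mul_cancel (ne_of_gt hQ2'), Real.rpow_one] at this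
    have h3 : f a ≤ (B + D) * (A / (2 * (B + D))) := by
      rw [hfdef]
      nlinarith [Real.rpow_pos_of_pos ha0 (p - 2), Real.rpow_pos_of_pos ha0 (Q - 2)]
    have h4 : (B + D) * (A / (2 * (B + D))) = A / 2 := by field_simp
    linarith
  have hfb : A ≤ f b := by
    have h1 : (2 * A / B) ^ (1 / (p - 2)) ≤ b := hbdef ▸ le_max_right _ _
    have h2 : 2 * A / B ≤ b ^ (p - 2) := by
      have := Real.rpow_le_rpow (le_of_lt (Real.rpow_pos_of_pos (by positivity) _)) h1 (le_of_lt hp2')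
      rwa [← Real.rpow_mul (by positivity), one_div_mul_cancel (ne_of_gt hp2'), Real.rpow_one] at this
    have hb0 : 0 < b := lt_of_lt_of_le ha0 hab
    have h3 : B * (2 * A / B) ≤ B * b ^ (p - 2) := mul_le_mul_of_nonneg_left h2 (le_of_lt hB)
    have h4 : B * (2 * A / B) = 2 * A := by field_simp
    have h5 : 0 < D * b ^ (Q - 2) := mul_pos hD (Real.rpow_pos_of_pos hb0 _)
    rw [hfdef]; linarith
  have hfc : ContinuousOn f (Icc a b) := by
    intro t ht
    have ht0 : 0 < t := lt_of_lt_of_le ha0 ht.1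
    have c1 : ContinuousAt (fun t : ℝ => t ^ (p - 2)) t :=
      Real.continuousAt_rpow_const t (p - 2) (Or.inl (ne_of_gt ht0))
    have c2 : ContinuousAt (fun t : ℝ => t ^ (Q - 2)) t :=
      Real.continuousAt_rpow_const t (Q - 2) (Or.inl (ne_of_gt ht0))
    have : ContinuousAt f t := by
      have : ContinuousAt (fun t : ℝ => B * t ^ (p - 2) + D * t ^ (Q - 2)) t :=
        (continuousAt_const.mul c1).add (continuousAt_const.mul c2)
      exact this.congr (Filter.Eventually.of_forall (fun x => (hfdef x).symm))
    exact this.continuousWithinAt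
  obtain ⟨tu, htu_mem, htu_eq⟩ : ∃ t ∈ Icc a b, f t = A :=
    intermediate_value_Icc hab hfc ⟨hfa, hfb⟩
  have htu0 : 0 < tu := lt_of_lt_of_le ha0 htu_mem.1
  have htu_crit : deriv g tu = 0 := by
    rw [hderiv_eq tu htu0, htu_eq]; ring
  -- global max statement (proved first, used also implicitly)
  have hmax : ∀ t : ℝ, 0 < t → deriv g t = 0 → ∀ s : ℝ, 0 < s → g s ≤ g t := by
    intro t ht hdt s hs
    have hft : f t = A := hcrit t ht hdt
    rcases lt_trichotomy s t with hst | hst | hst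
    · have hcont : ContinuousOn g (Icc s t) := fun x hx =>
        ((hg' x (lt_of_lt_of_le hs hx.1)).continuousAt).continuousWithinAt
      have hmono : StrictMonoOn g (Icc s t) := by
        apply strictMonoOn_of_deriv_pos (convex_Icc s t) hcont
        intro x hx
        rw [interior_Icc] at hx
        have hx0 : 0 < x := lt_trans hs hx.1
        have hfx : f x < A := by
          rw [← hft]; exact hfmono (mem_Ioi.mpr hx0) (mem_Ioi.mpr ht) hx.2
        rw [hderiv_eq x hx0]
        exact mul_pos hx0 (by linarith)
      exact le_of_lt (hmono ⟨le_refl s, le_of_lt hst⟩ ⟨le_of_lt hst, le_refl t⟩ hst)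
    · rw [hst]
    · have hcont : ContinuousOn g (Icc t s) := fun x hx =>
        ((hg' x (lt_of_lt_of_le ht hx.1)).continuousAt).continuousWithinAt
      have hanti : StrictAntiOn g (Icc t s) := by
        apply strictAntiOn_of_deriv_neg (convex_Icc t s) hcont
        intro x hx
        rw [interior_Icc] at hx
        have hx0 : 0 < x := lt_trans ht hx.1
        have hfx : A < f x := by
          rw [← hft]; exact hfmono (mem_Ioi.mpr ht) (mem_Ioi.mpr hx0) hx.1
        rw [hderiv_eq x hx0]
        exact mul_neg_of_pos_of_neg hx0 (by linarith)
      exact le_of_lt (hanti ⟨le_refl t, le_of_lt hst⟩ ⟨le_of_lt hst, le_refl s⟩ hst)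
  refine ⟨⟨tu, ⟨htu0, htu_crit⟩, ?_⟩, hmax⟩
  rintro y ⟨hy0, hy⟩
  have hfy : f y = A := hcrit y hy0 hy
  exact hfmono.injOn (mem_Ioi.mpr hy0) (mem_Ioi.mpr htu0) (by rw [hfy, htu_eq])
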